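/- Let λ, μ, β > 0 with λ ≤ 2μβ and set ρ = λ/μ. Define the functional F on continuous functions x : [0,∞) → ℝ by F(x)(t) = (2μβ − λ)t − μ∫₀ᵗ (3x(u) + 2μ∫₀ᵘ x(v) dv) du. Then the pair (x₁, r) with x₁(t) = (2β − ρ)(e^{−μt} − e^{−2μt}) and r ≡ 0 is the unique solution of the generalized Skorokhod problem associated with F; moreover x₁(t) ≥ 0 for all t ≥ 0 and μ∫₀ᵗ x₁(u) du = (β − ρ/2)(1 − 2e^{−μt} + e^{−2μt}) for all t ≥ 0. -/

import Mathlib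

open Real Set intervalIntegral

/-- A pair `(x, r)` of continuous functions on `[0,∞)` is a solution of the Skorokhod
problem associated with `z` if `x = z + r`, `x ≥ 0`, `r` is nondecreasing with `r 0 = 0`,
and `r` increases only at times where `x` vanishes. -/
def IsSkorokhodSolution (z x r : ℝ → ℝ) : Prop :=
  ContinuousOn x (Set.Ici 0) ∧ ContinuousOn r (Set.Ici 0) ∧
  (∀ t, 0 ≤ t → x t = z t + r t) ∧
  (∀ t, 0 ≤ t → 0 ≤ x t) ∧
  MonotoneOn r (Set.Ici 0) ∧ r 0 = 0 ∧
  (∀ s t, 0 ≤ s → s ≤ t → (∀ u, u ∈ Set.Icc s t → 0 < x u) → r s = r t)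

/-- A pair `(x, r)` is a solution of the generalized Skorokhod problem associated with a
functional `G` if it is a solution of the Skorokhod problem associated with `G x`. -/
def IsGSPSolution (G : (ℝ → ℝ) → (ℝ → ℝ)) (x r : ℝ → ℝ) : Prop :=
  IsSkorokhodSolution (G x) x r


/-- derivative of `exp (-(a*t))` -/
lemma expAux (a t : ℝ) :
    HasDerivAt (fun u : ℝ => Real.exp (-(a * u))) (-a * Real.exp (-(a * t))) t := by
  have h : HasDerivAt (fun u : ℝ => -(a * u)) (-a) t := by
    simpa using ((hasDerivAt_id t).const_mul a).fun_neg
  simpa [mul_comm] using h.exp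

noncomputable def f₁ (mu c t : ℝ) : ℝ := c * (Real.exp (-(mu * t)) - Real.exp (-(2 * mu * t)))

lemma f₁_hasDeriv (mu c t : ℝ) :
    HasDerivAt (f₁ mu c) (c * (-mu * Real.exp (-(mu * t)) + 2 * mu * Real.exp (-(2 * mu * t)))) t := by
  have h := ((expAux mu t).sub (expAux (2 * mu) t)).const_mul c
  exact h.congr_deriv (by ring)

lemma f₁_cont (mu c : ℝ) : Continuous (f₁ mu c) := by
  unfold f₁; continuity

lemma f₁_zero (mu c : ℝ) : f₁ mu c 0 = 0 := by simp [f₁]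

lemma f₁_nonneg (mu c : ℝ) (hmu : 0 < mu) (hc : 0 ≤ c) (t : ℝ) (ht : 0 ≤ t) :
    0 ≤ f₁ mu c t := by
  have h : Real.exp (-(2 * mu * t)) ≤ Real.exp (-(mu * t)) := by
    apply Real.exp_le_exp.2; nlinarith [mul_nonneg hmu.le ht]
  exact mul_nonneg hc (sub_nonneg.2 h)

lemma f₁_pos (mu c : ℝ) (hmu : 0 < mu) (hc : 0 < c) (t : ℝ) (ht : 0 < t) :
    0 < f₁ mu c t := by
  have h : Real.exp (-(2 * mu * t)) < Real.exp (-(mu * t)) := by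
    apply Real.exp_lt_exp.2; nlinarith
  exact mul_pos hc (sub_pos.2 h)

lemma f₁_integral (mu c : ℝ) (hmu : 0 < mu) (t : ℝ) :
    ∫ u in (0:ℝ)..t, f₁ mu c u
      = c / (2 * mu) * (1 - 2 * Real.exp (-(mu * t)) + Real.exp (-(2 * mu * t))) := by
  have h : ∀ u ∈ Set.uIcc (0:ℝ) t,
      HasDerivAt (fun s => c / (2 * mu) * (1 - 2 * Real.exp (-(mu * s)) + Real.exp (-(2 * mu * s))))
        (f₁ mu c u) u := by
    intro u _
    have h1 := (((expAux mu u).const_mul (2:ℝ)).const_sub 1).add (expAux (2 * mu) u)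
    have h2 := h1.const_mul (c / (2 * mu))
    refine h2.congr_deriv ?_
    unfold f₁
    field_simp
    ring
  have key := intervalIntegral.integral_eq_sub_of_hasDerivAt h
    ((f₁_cont mu c).intervalIntegrable 0 t)
  rw [key]; norm_num

lemma f₁_ptwise (mu c : ℝ) (hmu : 0 < mu) (u : ℝ) :
    3 * f₁ mu c u + 2 * mu * (c / (2 * mu) * (1 - 2 * Real.exp (-(mu * u)) + Real.exp (-(2 * mu * u))))
      = c * (1 + Real.exp (-(mu * u)) - 2 * Real.exp (-(2 * mu * u))) := by
  unfold f₁
  field_simp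
  ring

lemma f₁_key₂ (mu c : ℝ) (hmu : 0 < mu) (t : ℝ) :
    mu * c * t - mu * ∫ u in (0:ℝ)..t, (c * (1 + Real.exp (-(mu * u)) - 2 * Real.exp (-(2 * mu * u))))
      = f₁ mu c t := by
  have h : ∀ u ∈ Set.uIcc (0:ℝ) t,
      HasDerivAt (fun s => c * (s + (1 - Real.exp (-(mu * s))) / mu - (1 - Real.exp (-(2 * mu * s))) / mu))
        (c * (1 + Real.exp (-(mu * u)) - 2 * Real.exp (-(2 * mu * u)))) u := by
    intro u _
    have h1 := (((hasDerivAt_id u).add (((expAux mu u).const_sub 1).div_const mu)).sub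
      (((expAux (2 * mu) u).const_sub 1).div_const mu)).const_mul c
    refine h1.congr_deriv ?_
    field_simp
  have hcont : Continuous fun u : ℝ => c * (1 + Real.exp (-(mu * u)) - 2 * Real.exp (-(2 * mu * u))) := by
    continuity
  have key := intervalIntegral.integral_eq_sub_of_hasDerivAt h (hcont.intervalIntegrable 0 t)
  rw [key]
  unfold f₁
  field_simp
  ring

lemma f₁_key (mu c : ℝ) (hmu : 0 < mu) (t : ℝ) :
    mu * c * t - mu * ∫ u in (0:ℝ)..t,
        (3 * f₁ mu c u + 2 * mu * ∫ v in (0:ℝ)..u, f₁ mu c v) = f₁ mu c t := by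
  have hcongr : ∫ u in (0:ℝ)..t, (3 * f₁ mu c u + 2 * mu * ∫ v in (0:ℝ)..u, f₁ mu c v)
      = ∫ u in (0:ℝ)..t, (c * (1 + Real.exp (-(mu * u)) - 2 * Real.exp (-(2 * mu * u)))) := by
    apply intervalIntegral.integral_congr
    intro u _
    simp only
    rw [f₁_integral mu c hmu u]
    exact f₁_ptwise mu c hmu u
  rw [hcongr]
  exact f₁_key₂ mu c hmu t

lemma ode_zero (a T : ℝ) (g h : ℝ → ℝ) (hg : ∀ t, HasDerivAt g (h t) t)
    (hrel : ∀ t, t ∈ Set.Ico (0:ℝ) T → h t + a * g t = 0) (h0 : g 0 = 0) :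
    ∀ t ∈ Set.Icc (0:ℝ) T, g t = 0 := by
  set φ : ℝ → ℝ := fun t => Real.exp (a * t) * g t with hφdef
  have hφ : ∀ t, HasDerivAt φ (Real.exp (a * t) * (h t + a * g t)) t := by
    intro t
    have he : HasDerivAt (fun u : ℝ => Real.exp (a * u)) (a * Real.exp (a * t)) t := by
      have h1 : HasDerivAt (fun u : ℝ => a * u) a t := by
        simpa using (hasDerivAt_id t).const_mul a
      simpa [mul_comm] using h1.exp
    have := he.mul (hg t)
    exact this.congr_deriv (by ring)
  have hconst := constant_of_has_deriv_right_zero (f := φ) (a := 0) (b := T)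
    (fun t _ => (hφ t).continuousAt.continuousWithinAt)
    (by
      intro t ht
      have h2 : Real.exp (a * t) * (h t + a * g t) = 0 := by rw [hrel t ht]; ring
      exact h2 ▸ (hφ t).hasDerivWithinAt)
  intro t ht
  have h1 : φ t = φ 0 := hconst t ht
  have h2 : φ 0 = 0 := by simp [hφdef, h0]
  have h3 : Real.exp (a * t) * g t = 0 := h1.trans h2
  rcases mul_eq_zero.1 h3 with h | h
  · exact absurd h (Real.exp_pos (a * t)).ne'
  · exact h

theorem fluid_limit_overloaded
    (lam mu beta rho : ℝ) (hlam : 0 < lam) (hmu : 0 < mu) (hbeta : 0 < beta)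
    (hover : lam ≤ 2 * mu * beta) (hrho : rho = lam / mu)
    (F : (ℝ → ℝ) → (ℝ → ℝ))
    (hF : ∀ x t, F x t =
      (2 * mu * beta - lam) * t
        - mu * ∫ u in (0:ℝ)..t, (3 * x u + 2 * mu * ∫ v in (0:ℝ)..u, x v))
    (x₁ : ℝ → ℝ)
    (hx₁ : ∀ t, x₁ t = (2 * beta - rho) * (Real.exp (-(mu * t)) - Real.exp (-(2 * mu * t)))) :
    IsGSPSolution F x₁ (fun _ => 0) ∧
    (∀ x r, IsGSPSolution F x r → ∀ t, 0 ≤ t → x t = x₁ t ∧ r t = 0) ∧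
    (∀ t, 0 ≤ t → 0 ≤ x₁ t) ∧
    (∀ t, 0 ≤ t → mu * ∫ u in (0:ℝ)..t, x₁ u
      = (beta - rho / 2) * (1 - 2 * Real.exp (-(mu * t)) + Real.exp (-(2 * mu * t)))) := by
  set c : ℝ := 2 * beta - rho with hcdef
  have hc : 0 ≤ c := by
    rw [hcdef, hrho, sub_nonneg, div_le_iff₀ hmu]
    linarith
  have hmc : 2 * mu * beta - lam = mu * c := by
    rw [hcdef, hrho]
    field_simp
  have hx₁f : x₁ = f₁ mu c := funext fun t => by rw [hx₁]; rfl
  subst hx₁f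
  -- existence
  have hexist : IsGSPSolution F (f₁ mu c) (fun _ => 0) := by
    refine ⟨(f₁_cont mu c).continuousOn, continuous_const.continuousOn, ?_,
      fun t ht => f₁_nonneg mu c hmu hc t ht, fun a _ b _ _ => le_refl 0, rfl,
      fun s t _ _ _ => rfl⟩
    intro t ht
    rw [hF, hmc]
    simpa using (f₁_key mu c hmu t).symm
  refine ⟨hexist, ?_, fun t ht => f₁_nonneg mu c hmu hc t ht, ?_⟩
  · -- uniqueness
    intro x r hsol
    obtain ⟨hxc, hrc, heq, hxnn, hrmono, hr0, hcompl⟩ := hsol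
    set xe : ℝ → ℝ := fun t => x (max t 0) with hxedef
    set re : ℝ → ℝ := fun t => r (max t 0) with hredef
    have hmax : ∀ t : ℝ, max t 0 ∈ Set.Ici (0:ℝ) := fun t => le_max_right t 0
    have hxe_cont : Continuous xe :=
      hxc.comp_continuous (continuous_id.max continuous_const) hmax
    have hre_cont : Continuous re :=
      hrc.comp_continuous (continuous_id.max continuous_const) hmax
    have hxe_eq : ∀ t, 0 ≤ t → xe t = x t := fun t ht => by
      rw [hxedef]; simp [max_eq_left ht]
    have hre_eq : ∀ t, 0 ≤ t → re t = r t := fun t ht => by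
      rw [hredef]; simp [max_eq_left ht]
    have hre0 : re 0 = 0 := by rw [hredef]; simpa using hr0
    have hre_nonneg : ∀ t, 0 ≤ re t := fun t => by
      have := hrmono (Set.self_mem_Ici) (hmax t) (le_max_right t 0)
      rw [hr0] at this
      exact this
    have hre_neg : ∀ t, t ≤ 0 → re t = 0 := fun t ht => by
      rw [hredef]; simp [max_eq_right ht, hr0]
    have hxe_nonneg : ∀ t, 0 ≤ xe t := fun t => hxnn _ (hmax t)
    set d : ℝ → ℝ := fun t => xe t - f₁ mu c t with hddef
    have hd_cont : Continuous d := hxe_cont.sub (f₁_cont mu c)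
    set D : ℝ → ℝ := fun t => ∫ s in (0:ℝ)..t, d s with hDdef
    have hD_deriv : ∀ t, HasDerivAt D (d t) t := fun t =>
      (hd_cont.integral_hasStrictDerivAt 0 t).hasDerivAt
    have hD_cont : Continuous D := Differentiable.continuous (fun t => (hD_deriv t).differentiableAt)
    set E : ℝ → ℝ := fun t => ∫ s in (0:ℝ)..t, D s with hEdef
    have hE_deriv : ∀ t, HasDerivAt E (D t) t := fun t =>
      (hD_cont.integral_hasStrictDerivAt 0 t).hasDerivAt
    have hE_cont : Continuous E := Differentiable.continuous (fun t => (hE_deriv t).differentiableAt)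
    have hD0 : D 0 = 0 := intervalIntegral.integral_same
    have hE0 : E 0 = 0 := intervalIntegral.integral_same
    -- the key relation
    have hstar : ∀ t, 0 ≤ t → d t + (3 * mu * D t + 2 * mu ^ 2 * E t) = re t := by
      intro t ht
      have h1 := heq t ht
      rw [hF, hmc] at h1
      have e1 : (∫ u in (0:ℝ)..t, (3 * x u + 2 * mu * ∫ v in (0:ℝ)..u, x v))
          = ∫ u in (0:ℝ)..t,
              ((c * (1 + Real.exp (-(mu * u)) - 2 * Real.exp (-(2 * mu * u))))
                + (3 * d u + 2 * mu * D u)) := by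
        apply intervalIntegral.integral_congr
        intro u hu
        rw [Set.uIcc_of_le ht] at hu
        have hu0 : 0 ≤ u := hu.1
        have hinner : (∫ v in (0:ℝ)..u, x v) = D u + ∫ v in (0:ℝ)..u, f₁ mu c v := by
          have i1 : (∫ v in (0:ℝ)..u, x v) = ∫ v in (0:ℝ)..u, xe v := by
            apply intervalIntegral.integral_congr
            intro v hv
            rw [Set.uIcc_of_le hu0] at hv
            exact (hxe_eq v hv.1).symm
          have i2 : (∫ v in (0:ℝ)..u, xe v)
              = (∫ v in (0:ℝ)..u, d v) + ∫ v in (0:ℝ)..u, f₁ mu c v := by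
            rw [← intervalIntegral.integral_add (hd_cont.intervalIntegrable 0 u)
              ((f₁_cont mu c).intervalIntegrable 0 u)]
            apply intervalIntegral.integral_congr
            intro v _
            simp [hddef]
          rw [i1, i2, hDdef]
        simp only
        rw [hinner, f₁_integral mu c hmu u, ← hxe_eq u hu0]
        have hpt := f₁_ptwise mu c hmu u
        have hxd : xe u = d u + f₁ mu c u := by rw [hddef]; ring
        rw [hxd]
        linarith [hpt]
      have e2 : (∫ u in (0:ℝ)..t,
              ((c * (1 + Real.exp (-(mu * u)) - 2 * Real.exp (-(2 * mu * u))))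
                + (3 * d u + 2 * mu * D u)))
          = (∫ u in (0:ℝ)..t, (c * (1 + Real.exp (-(mu * u)) - 2 * Real.exp (-(2 * mu * u)))))
            + (3 * D t + 2 * mu * E t) := by
        have hcont1 : Continuous fun u : ℝ =>
            c * (1 + Real.exp (-(mu * u)) - 2 * Real.exp (-(2 * mu * u))) := by
          have ce : ∀ a : ℝ, Continuous fun u : ℝ => Real.exp (-(a * u)) := fun a =>
            Real.continuous_exp.comp (continuous_const.mul continuous_id).neg
          exact continuous_const.mul
            (((continuous_const.add (ce mu)).sub (continuous_const.mul (ce (2 * mu)))))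
        have hcont2 : Continuous fun u : ℝ => 3 * d u + 2 * mu * D u :=
          (continuous_const.mul hd_cont).add (continuous_const.mul hD_cont)
        rw [intervalIntegral.integral_add (hcont1.intervalIntegrable 0 t)
          (hcont2.intervalIntegrable 0 t)]
        congr 1
        rw [intervalIntegral.integral_add ((continuous_const.fun_mul hd_cont).intervalIntegrable 0 t)
          ((continuous_const.fun_mul hD_cont).intervalIntegrable 0 t),
          intervalIntegral.integral_const_mul, intervalIntegral.integral_const_mul]
      rw [e1, e2] at h1
      have hkey := f₁_key₂ mu c hmu t
      have hxd : x t = xe t := (hxe_eq t ht).symm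
      have hrd : r t = re t := (hre_eq t ht).symm
      rw [hxd, hrd] at h1
      have hd : d t = xe t - f₁ mu c t := rfl
      linear_combination h1 + hkey + hd
    set G : ℝ → ℝ := fun t => D t + mu * E t with hGdef
    have hG_deriv : ∀ t, HasDerivAt G (d t + mu * D t) t := fun t =>
      (hD_deriv t).add ((hE_deriv t).const_mul mu)
    have hG0 : G 0 = 0 := by rw [hGdef]; simp [hD0, hE0]
    -- Step A : re vanishes on [0, ∞)
    have hre_zero : ∀ t, 0 ≤ t → re t = 0 := by
      rcases hc.eq_or_lt with hc0 | hcpos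
      · -- case c = 0
        have hf₁0 : ∀ u : ℝ, f₁ mu c u = 0 := fun u => by rw [← hc0]; simp [f₁]
        have hdxe : ∀ u, d u = xe u := fun u => by
          have h : d u = xe u - f₁ mu c u := rfl
          rw [h, hf₁0, sub_zero]
        have hd_nonneg : ∀ u, 0 ≤ d u := fun u => (hdxe u) ▸ hxe_nonneg u
        have hD_nonneg : ∀ u, 0 ≤ u → 0 ≤ D u := fun u hu =>
          intervalIntegral.integral_nonneg hu (fun v _ => hd_nonneg v)
        have hq_cont : Continuous fun u => 3 * mu * D u + 2 * mu ^ 2 * E u :=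
          (continuous_const.mul hD_cont).add (continuous_const.mul hE_cont)
        have claim : ∀ t, 0 ≤ t → re t ≤ 3 * mu * D t + 2 * mu ^ 2 * E t := by
          intro t ht
          by_contra hlt
          push_neg at hlt
          have hK0 : (0:ℝ) ∈ {u : ℝ | u ∈ Set.Icc (0:ℝ) t ∧
              re u ≤ 3 * mu * D u + 2 * mu ^ 2 * E u} :=
            ⟨⟨le_refl 0, ht⟩, by rw [hre0]; simp [hD0, hE0]⟩
          have hKc : IsClosed {u : ℝ | u ∈ Set.Icc (0:ℝ) t ∧
              re u ≤ 3 * mu * D u + 2 * mu ^ 2 * E u} :=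
            isClosed_Icc.inter (isClosed_le hre_cont hq_cont)
          have hKb : BddAbove {u : ℝ | u ∈ Set.Icc (0:ℝ) t ∧
              re u ≤ 3 * mu * D u + 2 * mu ^ 2 * E u} := ⟨t, fun u hu => hu.1.2⟩
          have hsK := hKc.csSup_mem ⟨0, hK0⟩ hKb
          set s := sSup {u : ℝ | u ∈ Set.Icc (0:ℝ) t ∧
              re u ≤ 3 * mu * D u + 2 * mu ^ 2 * E u} with hsdef
          have hs0 : 0 ≤ s := hsK.1.1
          have hsq : re s ≤ 3 * mu * D s + 2 * mu ^ 2 * E s := hsK.2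
          have hst : s < t := by
            rcases lt_or_eq_of_le hsK.1.2 with h | h
            · exact h
            · exfalso; rw [h] at hsq; exact absurd hsq (not_le.2 hlt)
          have hxpos : ∀ u, u ∈ Set.Ioc s t → 0 < x u := by
            intro u hu
            have hu0 : 0 ≤ u := hs0.trans hu.1.le
            have hnotK : ¬ (re u ≤ 3 * mu * D u + 2 * mu ^ 2 * E u) := by
              intro h
              exact absurd (le_csSup hKb ⟨⟨hu0, hu.2⟩, h⟩) (not_le.2 hu.1)
            push_neg at hnotK
            have h1 := hstar u hu0
            have h2 := hdxe u
            have h3 := hxe_eq u hu0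
            linarith
          have hreq : ∀ s', s' ∈ Set.Ioc s t → re s' = re t := by
            intro s' hs'
            have h0' : 0 ≤ s' := hs0.trans hs'.1.le
            rw [hre_eq s' h0', hre_eq t ht]
            exact hcompl s' t h0' hs'.2 (fun u hu =>
              hxpos u ⟨lt_of_lt_of_le hs'.1 hu.1, hu.2⟩)
          have hlim : re s = re t := by
            have h1 : Filter.Tendsto re (nhdsWithin s (Set.Ioi s)) (nhds (re s)) :=
              (hre_cont.tendsto s).mono_left nhdsWithin_le_nhds
            have h2 : ∀ᶠ u in nhdsWithin s (Set.Ioi s), re u = re t := by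
              filter_upwards [Ioc_mem_nhdsGT_of_mem (Set.mem_Ico.2 ⟨le_refl s, hst⟩)] with u hu
              exact hreq u hu
            exact tendsto_nhds_unique (h1.congr' h2) tendsto_const_nhds
          have hDst : D s ≤ D t := by
            have h3 := intervalIntegral.integral_interval_sub_left
              (hd_cont.intervalIntegrable (μ := MeasureTheory.volume) 0 t)
              (hd_cont.intervalIntegrable (μ := MeasureTheory.volume) 0 s)
            have h4 : 0 ≤ ∫ u in s..t, d u :=
              intervalIntegral.integral_nonneg hst.le (fun v _ => hd_nonneg v)
            have hDt : D t = ∫ u in (0:ℝ)..t, d u := rfl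
            have hDs : D s = ∫ u in (0:ℝ)..s, d u := rfl
            rw [hDt, hDs]
            linarith
          have hEst : E s ≤ E t := by
            have h3 := intervalIntegral.integral_interval_sub_left
              (hD_cont.intervalIntegrable (μ := MeasureTheory.volume) 0 t)
              (hD_cont.intervalIntegrable (μ := MeasureTheory.volume) 0 s)
            have h4 : 0 ≤ ∫ u in s..t, D u :=
              intervalIntegral.integral_nonneg hst.le (fun v hv => hD_nonneg v (hs0.trans hv.1))
            have hEt : E t = ∫ u in (0:ℝ)..t, D u := rfl
            have hEs : E s = ∫ u in (0:ℝ)..s, D u := rfl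
            rw [hEt, hEs]
            linarith
          have hq : 3 * mu * D s + 2 * mu ^ 2 * E s ≤ 3 * mu * D t + 2 * mu ^ 2 * E t := by
            nlinarith [hDst, hEst, hmu]
          linarith
        have hd0 : ∀ u, 0 ≤ u → d u = 0 := fun u hu =>
          le_antisymm (by linarith [hstar u hu, claim u hu]) (hd_nonneg u)
        have hDz : ∀ u, 0 ≤ u → D u = 0 := by
          intro u hu
          have h : ∫ v in (0:ℝ)..u, d v = ∫ v in (0:ℝ)..u, (0:ℝ) := by
            apply intervalIntegral.integral_congr
            intro v hv
            rw [Set.uIcc_of_le hu] at hv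
            exact hd0 v hv.1
          have hDu : D u = ∫ v in (0:ℝ)..u, d v := rfl
          rw [hDu, h]
          simp
        have hEz : ∀ u, 0 ≤ u → E u = 0 := by
          intro u hu
          have h : ∫ v in (0:ℝ)..u, D v = ∫ v in (0:ℝ)..u, (0:ℝ) := by
            apply intervalIntegral.integral_congr
            intro v hv
            rw [Set.uIcc_of_le hu] at hv
            exact hDz v hv.1
          have hEu : E u = ∫ v in (0:ℝ)..u, D v := rfl
          rw [hEu, h]
          simp
        intro t ht
        rw [← hstar t ht, hd0 t ht, hDz t ht, hEz t ht]
        ring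
      · -- case 0 < c
        by_contra hcon
        push_neg at hcon
        obtain ⟨T, hT0, hTne⟩ := hcon
        have hT : 0 < re T := lt_of_le_of_ne (hre_nonneg T) (Ne.symm hTne)
        have hSne : Set.Nonempty {u : ℝ | 0 < re u} := ⟨T, hT⟩
        have hSbd : BddBelow {u : ℝ | 0 < re u} := ⟨0, fun u hu => by
          by_contra h
          push_neg at h
          have hu' : (0:ℝ) < re u := hu
          rw [hre_neg u h.le] at hu'
          exact lt_irrefl 0 hu'⟩
        set t₀ := sInf {u : ℝ | 0 < re u} with ht₀def
        have ht₀0 : 0 ≤ t₀ := le_csInf hSne (fun u hu => by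
          by_contra h
          push_neg at h
          have hu' : (0:ℝ) < re u := hu
          rw [hre_neg u h.le] at hu'
          exact lt_irrefl 0 hu')
        have hbefore : ∀ s, s < t₀ → re s = 0 := by
          intro s hs
          by_contra h
          have h2 : 0 < re s := lt_of_le_of_ne (hre_nonneg s) (Ne.symm h)
          exact absurd (csInf_le hSbd h2) (not_le.2 hs)
        have ht₀re : re t₀ = 0 := by
          by_contra h
          have hpos : 0 < re t₀ := lt_of_le_of_ne (hre_nonneg t₀) (Ne.symm h)
          have hopen : IsOpen {u : ℝ | 0 < re u} := isOpen_lt continuous_const hre_cont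
          obtain ⟨ε, hε, hball⟩ := Metric.isOpen_iff.1 hopen t₀ hpos
          have hdist : dist (t₀ - ε / 2) t₀ = ε / 2 := by
            rw [Real.dist_eq, show t₀ - ε / 2 - t₀ = -(ε / 2) by ring, abs_neg,
              abs_of_pos (half_pos hε)]
          have hmem : t₀ - ε / 2 ∈ Metric.ball t₀ ε := by
            rw [Metric.mem_ball, hdist]
            linarith
          have hin : (0:ℝ) < re (t₀ - ε / 2) := hball hmem
          have := csInf_le hSbd hin
          linarith
        have hGz : ∀ u ∈ Set.Icc (0:ℝ) t₀, G u = 0 := by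
          refine ode_zero (2 * mu) t₀ G (fun u => d u + mu * D u) hG_deriv ?_ hG0
          intro u hu
          have h1 := hstar u hu.1
          have h2 := hbefore u hu.2
          have hGu : G u = D u + mu * E u := rfl
          linear_combination h1 + 2 * mu * hGu + h2
        have hEz : ∀ u ∈ Set.Icc (0:ℝ) t₀, E u = 0 := by
          refine ode_zero mu t₀ E D hE_deriv ?_ hE0
          intro u hu
          have h1 := hGz u ⟨hu.1, hu.2.le⟩
          have hGu : G u = D u + mu * E u := rfl
          linarith
        have hEt₀ : E t₀ = 0 := hEz t₀ ⟨ht₀0, le_refl t₀⟩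
        have hDt₀ : D t₀ = 0 := by
          have h1 := hGz t₀ ⟨ht₀0, le_refl t₀⟩
          have hGu : G t₀ = D t₀ + mu * E t₀ := rfl
          linear_combination h1 - hGu - mu * hEt₀
        have hΦcont : Continuous fun u => f₁ mu c u - (3 * mu * D u + 2 * mu ^ 2 * E u) :=
          (f₁_cont mu c).sub ((continuous_const.mul hD_cont).add (continuous_const.mul hE_cont))
        have hΦη : ∃ η, 0 < η ∧ ∀ u, t₀ < u → u < t₀ + η →
            0 < f₁ mu c u - (3 * mu * D u + 2 * mu ^ 2 * E u) := by
          rcases ht₀0.eq_or_lt with h0 | hpos0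
          · -- t₀ = 0
            have hx0 : x 0 = 0 := by
              have h1 := heq 0 (le_refl 0)
              rw [hF] at h1
              simpa [hr0] using h1
            have hd0' : d 0 = 0 := by
              have h : d 0 = xe 0 - f₁ mu c 0 := rfl
              rw [h, hxe_eq 0 (le_refl 0), hx0, f₁_zero]
              ring
            have hΦderiv : HasDerivAt
                (fun u => f₁ mu c u - (3 * mu * D u + 2 * mu ^ 2 * E u)) (c * mu) 0 := by
              have h1 := f₁_hasDeriv mu c 0
              have h2 := ((hD_deriv 0).const_mul (3 * mu)).add
                ((hE_deriv 0).const_mul (2 * mu ^ 2))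
              have h3 := h1.sub h2
              refine h3.congr_deriv ?_
              rw [hd0', hD0]
              simp only [mul_zero, neg_zero, Real.exp_zero, mul_one]
              ring
            have hslope := hasDerivAt_iff_tendsto_slope.1 hΦderiv
            have hsub : Set.Ioi (0:ℝ) ⊆ {(0:ℝ)}ᶜ := fun u hu => ne_of_gt hu
            have hslope' := hslope.mono_left (nhdsWithin_mono 0 hsub)
            have hev : ∀ᶠ u in nhdsWithin (0:ℝ) (Set.Ioi 0),
                (0:ℝ) < slope (fun u => f₁ mu c u - (3 * mu * D u + 2 * mu ^ 2 * E u)) 0 u :=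
              hslope'.eventually (eventually_gt_nhds (mul_pos hcpos hmu))
            obtain ⟨b, hb, hsub2⟩ := mem_nhdsGT_iff_exists_Ioo_subset.1 hev
            refine ⟨b, hb, ?_⟩
            intro u hu1 hu2
            rw [← h0] at hu1 hu2
            have hu' : u ∈ Set.Ioo (0:ℝ) b := ⟨hu1, by linarith⟩
            have hs : (0:ℝ) < slope
                (fun u => f₁ mu c u - (3 * mu * D u + 2 * mu ^ 2 * E u)) 0 u := hsub2 hu'
            rw [slope_def_field] at hs
            have hΦ0 : f₁ mu c 0 - (3 * mu * D 0 + 2 * mu ^ 2 * E 0) = 0 := by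
              rw [f₁_zero, hD0, hE0]; ring
            rcases div_pos_iff.1 hs with ⟨hnum, _⟩ | ⟨_, hden⟩
            · rw [hΦ0] at hnum
              linarith
            · linarith
          · -- 0 < t₀
            have hΦt₀ : 0 < f₁ mu c t₀ - (3 * mu * D t₀ + 2 * mu ^ 2 * E t₀) := by
              rw [hDt₀, hEt₀]
              have := f₁_pos mu c hmu hcpos t₀ hpos0
              linarith
            have hopen : IsOpen {u : ℝ | 0 < f₁ mu c u - (3 * mu * D u + 2 * mu ^ 2 * E u)} :=
              isOpen_lt continuous_const hΦcont
            obtain ⟨ε, hε, hball⟩ := Metric.isOpen_iff.1 hopen t₀ hΦt₀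
            refine ⟨ε, hε, fun u h1 h2 => hball ?_⟩
            rw [Metric.mem_ball, Real.dist_eq, abs_lt]
            constructor <;> linarith
        obtain ⟨η, hη, hΦpos⟩ := hΦη
        obtain ⟨s, hsS, hslt⟩ := exists_lt_of_csInf_lt hSne
          (show sInf {u : ℝ | 0 < re u} < t₀ + η / 2 by rw [← ht₀def]; linarith)
        have hsS' : 0 < re s := hsS
        have ht₀s : t₀ < s := by
          rcases lt_or_eq_of_le (csInf_le hSbd hsS) with h | h
          · exact h
          · exfalso
            rw [← h] at hsS'
            rw [ht₀re] at hsS'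
            exact lt_irrefl 0 hsS'
        obtain ⟨t₁, ht₁mem, ht₁⟩ := intermediate_value_Ioo ht₀s.le hre_cont.continuousOn
          (show re s / 2 ∈ Set.Ioo (re t₀) (re s) by
            rw [ht₀re]; exact ⟨by linarith, by linarith⟩)
        have ht₁0 : 0 ≤ t₁ := ht₀0.trans ht₁mem.1.le
        have hex : ∃ u ∈ Set.Icc t₁ s, ¬ (0 < x u) := by
          by_contra hno
          push_neg at hno
          have hc' := hcompl t₁ s ht₁0 ht₁mem.2.le hno
          rw [← hre_eq t₁ ht₁0, ← hre_eq s (ht₁0.trans ht₁mem.2.le)] at hc'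
          rw [ht₁] at hc'
          linarith
        obtain ⟨u, huIcc, hule⟩ := hex
        have hu0 : 0 ≤ u := ht₁0.trans huIcc.1
        have hxu : xe u = 0 :=
          le_antisymm (by rw [hxe_eq u hu0]; exact not_lt.1 hule) (hxe_nonneg u)
        have hu1 : t₀ < u := lt_of_lt_of_le ht₁mem.1 huIcc.1
        have hu2 : u < t₀ + η := by
          have := huIcc.2
          linarith
        have hΦu := hΦpos u hu1 hu2
        have h1 := hstar u hu0
        have hdu : d u = xe u - f₁ mu c u := rfl
        have hneg : re u < 0 := by linarith
        linarith [hre_nonneg u]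
    -- Step B : conclude
    have hGall : ∀ t, 0 ≤ t → G t = 0 := by
      intro t ht
      refine ode_zero (2 * mu) t G (fun u => d u + mu * D u) hG_deriv ?_ hG0 t ⟨ht, le_refl t⟩
      intro u hu
      have h1 := hstar u hu.1
      have h2 := hre_zero u hu.1
      have hGu : G u = D u + mu * E u := rfl
      linear_combination h1 + 2 * mu * hGu + h2
    have hEall : ∀ t, 0 ≤ t → E t = 0 := by
      intro t ht
      refine ode_zero mu t E D hE_deriv ?_ hE0 t ⟨ht, le_refl t⟩
      intro u hu
      have h1 := hGall u hu.1
      have hGu : G u = D u + mu * E u := rfl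
      linarith [h1, hGu]
    have hDall : ∀ t, 0 ≤ t → D t = 0 := by
      intro t ht
      have h1 := hGall t ht
      have h2 := hEall t ht
      have hGu : G t = D t + mu * E t := rfl
      linear_combination h1 - hGu - mu * h2
    intro t ht
    have h1 := hstar t ht
    have h2 := hre_zero t ht
    have h3 := hDall t ht
    have h4 := hEall t ht
    have hd : d t = xe t - f₁ mu c t := rfl
    constructor
    · rw [← hxe_eq t ht]
      linear_combination h1 - hd - 3 * mu * h3 - 2 * mu ^ 2 * h4 + h2
    · rw [← hre_eq t ht]
      exact h2
  · -- integral formula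
    intro t ht
    rw [f₁_integral mu c hmu t]
    have hb : beta - rho / 2 = c / 2 := by rw [hcdef]; ring
    rw [hb]
    field_simp
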